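/- Let B be an event with P(B) > 0. Let Y⁰, Y¹ : Ω → {0,1}, let U be a nonempty finite index set, and for each u ∈ U let G_u : Ω → {0,1} be a random variable; define N_u = G_u·Y¹ + (1 − G_u)·Y⁰ (that is, N_u(ω) = Y^{G_u(ω)}(ω)). Define the events C = {ω : Y⁰(ω) ≠ Y¹(ω)}, R = {ω : N_u(ω) = N_{u'}(ω) for all u, u' ∈ U}, and L₀ = {ω : G_u(ω) = G_{u'}(ω) for all u, u' ∈ U}. Then C ∩ R = C ∩ L₀, and consequently Pr(C ∩ R | B) = Pr(C ∩ L₀ | B). -/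
import Mathlib


open MeasureTheory

/-- Conditional probability `Pr(A | B) = P(A ∩ B) / P(B)` as a real number. -/
noncomputable def condProb {Ω : Type*} [MeasurableSpace Ω] (μ : Measure Ω) (A B : Set Ω) : ℝ :=
  (μ (A ∩ B)).toReal / (μ B).toReal

/-- Property 2(b): with `N_u = G_u·Y¹ + (1 − G_u)·Y⁰`,
`C = {Y⁰ ≠ Y¹}`, `R = {all N_u equal}`, `L₀ = {all G_u equal}`, we have
`C ∩ R = C ∩ L₀`, hence `Pr(C ∩ R | B) = Pr(C ∩ L₀ | B)`. -/
theorem stmt11 {Ω : Type*} [MeasurableSpace Ω] (μ : Measure Ω) [IsProbabilityMeasure μ]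
    (B : Set Ω) (hBpos : 0 < μ B)
    {U : Type*} [Finite U] [Nonempty U]
    (Y0 Y1 : Ω → ℝ)
    (hY0 : ∀ ω, Y0 ω = 0 ∨ Y0 ω = 1) (hY1 : ∀ ω, Y1 ω = 0 ∨ Y1 ω = 1)
    (G : U → Ω → ℝ) (hG : ∀ u ω, G u ω = 0 ∨ G u ω = 1)
    (N : U → Ω → ℝ) (hN : ∀ u ω, N u ω = G u ω * Y1 ω + (1 - G u ω) * Y0 ω) :
    ({ω | Y0 ω ≠ Y1 ω} ∩ {ω | ∀ u u' : U, N u ω = N u' ω} =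
      {ω | Y0 ω ≠ Y1 ω} ∩ {ω | ∀ u u' : U, G u ω = G u' ω}) ∧
    condProb μ ({ω | Y0 ω ≠ Y1 ω} ∩ {ω | ∀ u u' : U, N u ω = N u' ω}) B =
      condProb μ ({ω | Y0 ω ≠ Y1 ω} ∩ {ω | ∀ u u' : U, G u ω = G u' ω}) B := by
  have hset : ({ω | Y0 ω ≠ Y1 ω} ∩ {ω | ∀ u u' : U, N u ω = N u' ω} =
      {ω | Y0 ω ≠ Y1 ω} ∩ {ω | ∀ u u' : U, G u ω = G u' ω}) := by
    ext ω
    simp only [Set.mem_inter_iff, Set.mem_setOf_eq]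
    constructor
    · rintro ⟨hC, hR⟩
      refine ⟨hC, fun u u' => ?_⟩
      have h := hR u u'
      rw [hN u ω, hN u' ω] at h
      rcases hG u ω with h1 | h1 <;> rcases hG u' ω with h2 | h2 <;>
        simp [h1, h2] at h ⊢ <;> first | exact hC h | exact hC h.symm
    · rintro ⟨hC, hL⟩
      refine ⟨hC, fun u u' => ?_⟩
      rw [hN u ω, hN u' ω, hL u u']
  exact ⟨hset, by rw [hset]⟩
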